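/- arXiv:1509.08024 — 5 statements merged into one kernel-verified Lean document; each statement's English description precedes it below -/
import Mathlib

section
/- Let T : H₁ → H₂ be densely defined with characteristic projection E. Then T is closable if and only if ker(I - E₂₂) = {0}, i.e., for every ψ ∈ H₂, E₂₂ψ = ψ implies ψ = 0. -/
section CharProj

variable {H₁ H₂ : Type*}
  [NormedAddCommGroup H₁] [InnerProductSpace ℂ H₁] [CompleteSpace H₁]
  [NormedAddCommGroup H₂] [InnerProductSpace ℂ H₂] [CompleteSpace H₂]

/-- The Hilbert space `H₁ ⊕ H₂` (with the ℓ²-sum inner product), as `WithLp 2 (H₁ × H₂)`,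
and the canonical identification. -/
noncomputable def toL2 : (H₁ × H₂) ≃ₗ[ℂ] WithLp 2 (H₁ × H₂) :=
  (WithLp.linearEquiv 2 ℂ (H₁ × H₂)).symm

/-- The graph of `T`, viewed inside the Hilbert space `H₁ ⊕ H₂`. -/
noncomputable def graphL2 (T : H₁ →ₗ.[ℂ] H₂) : Submodule ℂ (WithLp 2 (H₁ × H₂)) :=
  T.graph.map (toL2 : (H₁ × H₂) ≃ₗ[ℂ] WithLp 2 (H₁ × H₂)).toLinearMap

/-- `E` is the characteristic projection of `T`: the orthogonal projection of `H₁ ⊕ H₂`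
onto the closure of the graph of `T` (every value lies in the closure of the graph, and the
residual is orthogonal to it). -/
noncomputable def IsCharProj (T : H₁ →ₗ.[ℂ] H₂)
    (E : WithLp 2 (H₁ × H₂) →L[ℂ] WithLp 2 (H₁ × H₂)) : Prop :=
  ∀ v, E v ∈ (graphL2 T).topologicalClosure ∧
    ∀ w ∈ (graphL2 T).topologicalClosure, (inner ℂ (v - E v) w : ℂ) = 0

/-- Block components `E_ij : H_j → H_i` of an operator on `H₁ ⊕ H₂`. -/
noncomputable def Eb11 (E : WithLp 2 (H₁ × H₂) →L[ℂ] WithLp 2 (H₁ × H₂)) (x : H₁) : H₁ :=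
  ((WithLp.equiv 2 (H₁ × H₂)) (E (toL2 (x, 0)))).1

noncomputable def Eb21 (E : WithLp 2 (H₁ × H₂) →L[ℂ] WithLp 2 (H₁ × H₂)) (x : H₁) : H₂ :=
  ((WithLp.equiv 2 (H₁ × H₂)) (E (toL2 (x, 0)))).2

noncomputable def Eb12 (E : WithLp 2 (H₁ × H₂) →L[ℂ] WithLp 2 (H₁ × H₂)) (ψ : H₂) : H₁ :=
  ((WithLp.equiv 2 (H₁ × H₂)) (E (toL2 (0, ψ)))).1

noncomputable def Eb22 (E : WithLp 2 (H₁ × H₂) →L[ℂ] WithLp 2 (H₁ × H₂)) (ψ : H₂) : H₂ :=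
  ((WithLp.equiv 2 (H₁ × H₂)) (E (toL2 (0, ψ)))).2


/-- Membership in the closure of the graph is equivalent to being a fixed point of `E`. -/
lemma mem_clos_iff_fixed {T : H₁ →ₗ.[ℂ] H₂}
    {E : WithLp 2 (H₁ × H₂) →L[ℂ] WithLp 2 (H₁ × H₂)} (hE : IsCharProj T E)
    (v : WithLp 2 (H₁ × H₂)) : v ∈ (graphL2 T).topologicalClosure ↔ E v = v := by
  constructor
  · intro hv
    have hsub : v - E v ∈ (graphL2 T).topologicalClosure :=
      Submodule.sub_mem _ hv (hE v).1
    have := (hE v).2 _ hsub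
    rw [inner_self_eq_zero, sub_eq_zero] at this
    exact this.symm
  · intro h
    rw [← h]; exact (hE v).1

lemma closure_graph_mem_iff (T : H₁ →ₗ.[ℂ] H₂) (x : H₁ × H₂) :
    x ∈ T.graph.topologicalClosure ↔
      toL2 x ∈ (graphL2 T).topologicalClosure := by
  let e : (H₁ × H₂) ≃L[ℂ] WithLp 2 (H₁ × H₂) :=
    (WithLp.prodContinuousLinearEquiv 2 ℂ H₁ H₂).symm
  have hfun : ∀ y : H₁ × H₂, e y = toL2 y := fun _ => rfl
  have hset : ((graphL2 T : Submodule ℂ (WithLp 2 (H₁ × H₂))) : Set (WithLp 2 (H₁ × H₂)))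
      = e '' (T.graph : Set (H₁ × H₂)) := by
    rw [graphL2, Submodule.map_coe]
    rfl
  have him : (⇑e) '' closure (T.graph : Set (H₁ × H₂)) = closure ((⇑e) '' (T.graph : Set (H₁ × H₂))) :=
    e.toHomeomorph.image_closure _
  rw [← SetLike.mem_coe, ← SetLike.mem_coe, Submodule.topologicalClosure_coe,
    Submodule.topologicalClosure_coe, hset, ← him, ← hfun x]
  exact ⟨fun hx => ⟨x, hx, rfl⟩, fun ⟨y, hy, hxy⟩ => (e.injective hxy) ▸ hy⟩

/-- a densely defined `T` with characteristic projection `E` is closable if and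
only if `ker(I - E₂₂) = {0}`, i.e. `E₂₂ ψ = ψ` implies `ψ = 0`. -/
theorem stmt8 (T : H₁ →ₗ.[ℂ] H₂) (hdense : Dense (T.domain : Set H₁))
    (E : WithLp 2 (H₁ × H₂) →L[ℂ] WithLp 2 (H₁ × H₂)) (hE : IsCharProj T E) :
    T.IsClosable ↔ ∀ ψ : H₂, Eb22 E ψ = ψ → ψ = 0 := by
  have key : ∀ ψ : H₂, ((0, ψ) : H₁ × H₂) ∈ T.graph.topologicalClosure ↔ Eb22 E ψ = ψ := by
    intro ψ
    rw [closure_graph_mem_iff, mem_clos_iff_fixed hE]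
    constructor
    · intro h
      have : Eb22 E ψ = ((WithLp.equiv 2 (H₁ × H₂)) (toL2 (0, ψ) : WithLp 2 (H₁ × H₂))).2 := by
        rw [Eb22, h]
      exact this
    · intro h
      set v : WithLp 2 (H₁ × H₂) := toL2 (0, ψ) with hv
      -- second component of v - E v vanishes
      have h2 : (v - E v).ofLp.2 = 0 := by
        have : (E v).ofLp.2 = Eb22 E ψ := rfl
        have hv2 : v.ofLp.2 = ψ := rfl
        show v.ofLp.2 - (E v).ofLp.2 = 0
        rw [this, hv2, h, sub_self]
      -- inner (v - E v) v = ‖v - E v‖²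
      have horth : (inner ℂ (v - E v) (E v) : ℂ) = 0 := (hE v).2 _ (hE v).1
      have hinner : (inner ℂ (v - E v) v : ℂ) = 0 := by
        rw [WithLp.prod_inner_apply]
        have hv1 : v.ofLp.1 = (0 : H₁) := rfl
        rw [hv1, h2, inner_zero_right, inner_zero_left, add_zero]
      have : (inner ℂ (v - E v) (v - E v) : ℂ) = 0 := by
        rw [inner_sub_right, hinner, horth, sub_zero]
      rw [inner_self_eq_zero, sub_eq_zero] at this
      exact this.symm
  constructor
  · rintro ⟨f', hf'⟩ ψ hψ
    have : ((0, ψ) : H₁ × H₂) ∈ T.graph.topologicalClosure := (key ψ).mpr hψ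
    rw [hf'] at this
    exact f'.graph_fst_eq_zero_snd this rfl
  · intro h
    refine ⟨(T.graph.topologicalClosure).toLinearPMap, ?_⟩
    refine (Submodule.toLinearPMap_graph_eq _ ?_).symm
    rintro ⟨x₁, x₂⟩ hx hx1
    simp only at hx1
    subst hx1
    exact h x₂ ((key x₂).mp hx)

end CharProj
end

section
/- Let D ⊆ H₁ ∩ H₂, with D dense in H₁, and suppose there exists a selfadjoint operator Δ in H₁ with D ⊆ dom(Δ) and ⟨φ, Δφ⟩₁ = ‖φ‖₂² for all φ ∈ D. Then the set D* := {h ∈ H₂ : ∃C < ∞ with |⟨φ, h⟩₂| ≤ C‖φ‖₁ for all φ ∈ D} is dense in H₂. -/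
open scoped ComplexConjugate

/-- A sesquilinear form over `ℂ` vanishing on the diagonal vanishes identically. -/
lemma sesq_self_zero {E : Type*} [AddCommGroup E] [Module ℂ E]
    (B : E →ₗ⋆[ℂ] E →ₗ[ℂ] ℂ) (h : ∀ x, B x x = 0) (x y : E) : B x y = 0 := by
  have h1 := h (x + y)
  have h2 := h (x - y)
  have h3 := h (x + Complex.I • y)
  have h4 := h (x - Complex.I • y)
  simp only [map_add, map_sub, map_smulₛₗ, LinearMap.add_apply, LinearMap.sub_apply,
    LinearMap.map_smul, LinearMap.smul_apply, smul_eq_mul, Complex.conj_I,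
    RingHom.id_apply] at h1 h2 h3 h4
  linear_combination (h1 - h2) / 4 - Complex.I * (h3 - h4) / 4 +
    (B x y / 2 - B y x / 2) * Complex.I_mul_I

set_option maxHeartbeats 1000000 in
set_option synthInstance.maxHeartbeats 400000 in
/-- Let `D ⊆ H₁ ∩ H₂` (a dense submodule `D` of `H₁`, with `j : D → H₂` the
`H₂`-realization), and suppose there is a selfadjoint operator `Δ` in `H₁` with `D ⊆ dom Δ`
and `⟨φ, Δφ⟩₁ = ‖φ‖₂²` for all `φ ∈ D`. Then
`D* = {h ∈ H₂ : ∃ C, |⟨φ, h⟩₂| ≤ C‖φ‖₁ for all φ ∈ D}` is dense in `H₂`. -/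
theorem stmt10 {H₁ H₂ : Type*}
    [NormedAddCommGroup H₁] [InnerProductSpace ℂ H₁] [CompleteSpace H₁]
    [NormedAddCommGroup H₂] [InnerProductSpace ℂ H₂] [CompleteSpace H₂]
    (D : Submodule ℂ H₁) (j : D →ₗ[ℂ] H₂) (hj : Function.Injective j)
    (hD : Dense (D : Set H₁))
    (Δ : H₁ →ₗ.[ℂ] H₁) (hΔdense : Dense (Δ.domain : Set H₁)) (hΔsa : Δ.adjoint = Δ)
    (hsub : ∀ φ : D, (φ : H₁) ∈ Δ.domain)
    (hform : ∀ φ : D,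
      (inner ℂ ((φ : H₁)) (Δ ⟨(φ : H₁), hsub φ⟩) : ℂ) = ((‖j φ‖ ^ 2 : ℝ) : ℂ)) :
    Dense {h : H₂ | ∃ C : ℝ, ∀ φ : D, ‖(inner ℂ (j φ) h : ℂ)‖ ≤ C * ‖(φ : H₁)‖} := by
  classical
  -- the lift of `Δ` to a linear map on `D`
  set ΔL : D →ₗ[ℂ] H₁ := Δ.toFun.comp (LinearMap.codRestrict Δ.domain D.subtype hsub) with hΔL
  have hΔLapp : ∀ φ : D, ΔL φ = Δ ⟨(φ : H₁), hsub φ⟩ := fun φ => rfl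
  -- the key form identity, by polarization
  have key : ∀ φ ψ : D, (inner ℂ (j φ) (j ψ) : ℂ) = inner ℂ ((φ : H₁)) (ΔL ψ) := by
    -- the difference sesquilinear form
    set B : D →ₗ⋆[ℂ] D →ₗ[ℂ] ℂ :=
      { toFun := fun φ => ((innerₛₗ ℂ (j φ)).comp j) - ((innerₛₗ ℂ ((φ : H₁))).comp ΔL)
        map_add' := by
          intro x y
          ext ψ
          simp [inner_add_left]
          ring
        map_smul' := by
          intro c x
          ext ψ
          simp [inner_smul_left]
          ring } with hB
    have hdiag : ∀ φ : D, B φ φ = 0 := by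
      intro φ
      have h1 : (inner ℂ (j φ) (j φ) : ℂ) = ((‖j φ‖ ^ 2 : ℝ) : ℂ) := by
        rw [inner_self_eq_norm_sq_to_K]
        norm_cast
      have h2 := hform φ
      simp only [hB, LinearMap.coe_mk, AddHom.coe_mk, LinearMap.sub_apply, LinearMap.coe_comp,
        Function.comp_apply, innerₛₗ_apply_apply]
      rw [h1, hΔLapp, h2, sub_self]
    intro φ ψ
    have := sesq_self_zero B hdiag φ ψ
    simp only [hB, LinearMap.coe_mk, AddHom.coe_mk, LinearMap.sub_apply, LinearMap.coe_comp,
      Function.comp_apply, innerₛₗ_apply_apply, sub_eq_zero] at this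
    exact this
  -- `D*` as a submodule
  set Dstar : Submodule ℂ H₂ :=
    { carrier := {h : H₂ | ∃ C : ℝ, ∀ φ : D, ‖(inner ℂ (j φ) h : ℂ)‖ ≤ C * ‖(φ : H₁)‖}
      zero_mem' := ⟨0, fun φ => by simp⟩
      add_mem' := by
        rintro a b ⟨Ca, hCa⟩ ⟨Cb, hCb⟩
        refine ⟨Ca + Cb, fun φ => ?_⟩
        calc ‖(inner ℂ (j φ) (a + b) : ℂ)‖ ≤ ‖(inner ℂ (j φ) a : ℂ)‖ + ‖(inner ℂ (j φ) b : ℂ)‖ := by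
              rw [inner_add_right]; exact norm_add_le _ _
          _ ≤ Ca * ‖(φ : H₁)‖ + Cb * ‖(φ : H₁)‖ := add_le_add (hCa φ) (hCb φ)
          _ = (Ca + Cb) * ‖(φ : H₁)‖ := by ring
      smul_mem' := by
        rintro c a ⟨Ca, hCa⟩
        refine ⟨‖c‖ * Ca, fun φ => ?_⟩
        rw [inner_smul_right, norm_mul, mul_assoc]
        exact mul_le_mul_of_nonneg_left (hCa φ) (norm_nonneg c) } with hDstar
  show Dense (Dstar : Set H₂)
  rw [Submodule.dense_iff_topologicalClosure_eq_top, Submodule.topologicalClosure_eq_top_iff]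
  rw [Submodule.eq_bot_iff]
  intro k hk
  -- Step 1: `(range j)ᗮ ≤ Dstar`
  have hle : (LinearMap.range j)ᗮ ≤ Dstar := by
    intro h hh
    refine ⟨0, fun φ => ?_⟩
    have : (inner ℂ (j φ) h : ℂ) = 0 :=
      (Submodule.mem_orthogonal _ h).mp hh (j φ) (LinearMap.mem_range_self j φ)
    simp [this]
  -- Step 2: the twisted graph in `WithLp 2 (H₂ × H₁)`
  set G : D →ₗ[ℂ] WithLp 2 (H₂ × H₁) :=
    (WithLp.linearEquiv 2 ℂ (H₂ × H₁)).symm.toLinearMap.comp ((-j).prod D.subtype) with hG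
  have hGapp : ∀ φ : D, ((WithLp.linearEquiv 2 ℂ (H₂ × H₁)) (G φ)) = (-(j φ), (φ : H₁)) :=
    fun φ => rfl
  set k0 : WithLp 2 (H₂ × H₁) := (WithLp.linearEquiv 2 ℂ (H₂ × H₁)).symm (k, 0) with hk0
  have hk0' : (WithLp.linearEquiv 2 ℂ (H₂ × H₁)) k0 = (k, 0) := rfl
  -- `(k, 0)` is orthogonal to the orthogonal complement of the twisted graph
  have hmem : k0 ∈ ((LinearMap.range G)ᗮ)ᗮ := by
    rw [Submodule.mem_orthogonal]
    rintro u hu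
    have hu1 : u.fst ∈ Dstar := by
      refine ⟨‖u.snd‖, fun φ => ?_⟩
      have h0 : (inner ℂ (G φ) u : ℂ) = 0 :=
        (Submodule.mem_orthogonal _ u).mp hu (G φ) (LinearMap.mem_range_self G φ)
      rw [WithLp.prod_inner_apply] at h0
      change inner ℂ (G φ).fst u.fst + inner ℂ (G φ).snd u.snd = 0 at h0
      have hfst : (G φ).fst = -(j φ) := rfl
      have hsnd : (G φ).snd = (φ : H₁) := rfl
      rw [hfst, hsnd, inner_neg_left] at h0
      have heq : (inner ℂ (j φ) u.fst : ℂ) = inner ℂ ((φ : H₁)) u.snd := by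
        linear_combination -h0
      rw [heq]
      exact (norm_inner_le_norm _ _).trans_eq (mul_comm _ _)
    have : (inner ℂ u.fst k : ℂ) = 0 := (Submodule.mem_orthogonal _ k).mp hk u.fst hu1
    rw [WithLp.prod_inner_apply]
    show inner ℂ u.fst k0.fst + inner ℂ u.snd k0.snd = 0
    have hfst : k0.fst = k := rfl
    have hsnd : k0.snd = (0 : H₁) := rfl
    rw [hfst, hsnd, inner_zero_right, this, add_zero]
  rw [Submodule.orthogonal_orthogonal_eq_closure] at hmem
  -- extract an approximating sequence
  have hmem' : k0 ∈ closure ((LinearMap.range G : Submodule ℂ (WithLp 2 (H₂ × H₁))) : Set _) :=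
    hmem
  rw [mem_closure_iff_seq_limit] at hmem'
  obtain ⟨u, hu_mem, hu_lim⟩ := hmem'
  choose φseq hφseq using hu_mem
  -- convergence of the two components
  have hcont : Filter.Tendsto (fun n => (WithLp.prodContinuousLinearEquiv 2 ℂ H₂ H₁) (u n))
      Filter.atTop (nhds ((k, 0) : H₂ × H₁)) := by
    have := ((WithLp.prodContinuousLinearEquiv 2 ℂ H₂ H₁).continuous.tendsto k0).comp hu_lim
    exact this
  have h1 : Filter.Tendsto (fun n => (-(j (φseq n)) : H₂)) Filter.atTop (nhds k) := by
    have h := (continuous_fst.tendsto ((k, 0) : H₂ × H₁)).comp hcont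
    have e : (fun n => ((WithLp.prodContinuousLinearEquiv 2 ℂ H₂ H₁) (u n)).1)
        = fun n => (-(j (φseq n)) : H₂) := by
      funext n; rw [← hφseq n]; rfl
    simp only [Function.comp_def] at h
    rw [e] at h
    exact h
  have h2 : Filter.Tendsto (fun n => ((φseq n : H₁))) Filter.atTop (nhds 0) := by
    have h := (continuous_snd.tendsto ((k, 0) : H₂ × H₁)).comp hcont
    have e : (fun n => ((WithLp.prodContinuousLinearEquiv 2 ℂ H₂ H₁) (u n)).2)
        = fun n => ((φseq n : H₁)) := by
      funext n; rw [← hφseq n]; rfl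
    simp only [Function.comp_def] at h
    rw [e] at h
    exact h
  -- `k ⊥ range j`
  have hkperp : k ∈ (LinearMap.range j)ᗮ := by
    rw [Submodule.mem_orthogonal]
    rintro _ ⟨ψ, rfl⟩
    have hlim1 : Filter.Tendsto (fun n => (inner ℂ (j ψ) (-(j (φseq n))) : ℂ))
        Filter.atTop (nhds (inner ℂ (j ψ) k)) :=
      (Filter.Tendsto.inner tendsto_const_nhds h1)
    have heq : ∀ n, (inner ℂ (j ψ) (-(j (φseq n))) : ℂ)
        = -(starRingEnd ℂ) (inner ℂ ((φseq n : H₁)) (ΔL ψ)) := by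
      intro n
      rw [inner_neg_right, ← inner_conj_symm, key]
    have hlim2 : Filter.Tendsto (fun n => (inner ℂ (j ψ) (-(j (φseq n))) : ℂ))
        Filter.atTop (nhds 0) := by
      simp only [heq]
      have : Filter.Tendsto (fun n => (inner ℂ ((φseq n : H₁)) (ΔL ψ) : ℂ))
          Filter.atTop (nhds (inner ℂ (0 : H₁) (ΔL ψ))) :=
        Filter.Tendsto.inner h2 tendsto_const_nhds
      rw [inner_zero_left] at this
      have := ((Complex.continuous_conj.tendsto 0).comp this).neg
      simpa using this
    exact tendsto_nhds_unique hlim1 hlim2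
  -- `k` also lies in the double orthogonal complement of `range j`, hence `k = 0`
  have hk2 : k ∈ ((LinearMap.range j)ᗮ)ᗮ := (Submodule.orthogonal_le hle) hk
  have : (inner ℂ k k : ℂ) = 0 := (Submodule.mem_orthogonal _ k).mp hk2 k hkperp
  exact inner_self_eq_zero.mp this
end

section
/- Let (A, B) be a symmetric pair as above and L(x,y) = (By, Ax) the associated symmetric operator on K = H₁ ⊕ H₂. Then the map h ↦ (h, iB*h) is a linear isomorphism from N₋₁(A*B*) := {h ∈ dom(A*B*) : A*B*h = -h} onto the deficiency space N₋ᵢ(L*) = {ξ ∈ dom(L*) : L*ξ = -iξ}, and h ↦ (h, -iB*h) is a linear isomorphism from N₋₁(A*B*) onto N₊ᵢ(L*) = {ξ : L*ξ = iξ}. In particular, L has equal deficiency indices d₊ = d₋ = dim N₋₁(A*B*). -/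
section SymPair

variable {H₁ H₂ : Type*}
  [NormedAddCommGroup H₁] [InnerProductSpace ℂ H₁] [CompleteSpace H₁]
  [NormedAddCommGroup H₂] [InnerProductSpace ℂ H₂] [CompleteSpace H₂]

/-- `N₋₁(A*B*) = {u ∈ dom(A*B*) : A*B*u = -u}` (a subset of `H₁`). -/
noncomputable def NnegOne (A : H₁ →ₗ.[ℂ] H₂) (B : H₂ →ₗ.[ℂ] H₁) : Set H₁ :=
  {u | ∃ (h1 : u ∈ B.adjoint.domain) (h2 : B.adjoint ⟨u, h1⟩ ∈ A.adjoint.domain),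
    A.adjoint ⟨B.adjoint ⟨u, h1⟩, h2⟩ = -u}

/-- The deficiency space `N₋ᵢ(L*) = {ξ ∈ dom(L*) : L*ξ = -iξ}`, where
`dom(L*) = dom(B*) ⊕ dom(A*)` and `L*(u, v) = (A*v, B*u)`. -/
noncomputable def NdefNeg (A : H₁ →ₗ.[ℂ] H₂) (B : H₂ →ₗ.[ℂ] H₁) : Set (H₁ × H₂) :=
  {p | ∃ (h1 : p.1 ∈ B.adjoint.domain) (h2 : p.2 ∈ A.adjoint.domain),
    A.adjoint ⟨p.2, h2⟩ = -(Complex.I • p.1) ∧ B.adjoint ⟨p.1, h1⟩ = -(Complex.I • p.2)}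

/-- The deficiency space `N₊ᵢ(L*) = {ξ ∈ dom(L*) : L*ξ = iξ}`. -/
noncomputable def NdefPos (A : H₁ →ₗ.[ℂ] H₂) (B : H₂ →ₗ.[ℂ] H₁) : Set (H₁ × H₂) :=
  {p | ∃ (h1 : p.1 ∈ B.adjoint.domain) (h2 : p.2 ∈ A.adjoint.domain),
    A.adjoint ⟨p.2, h2⟩ = Complex.I • p.1 ∧ B.adjoint ⟨p.1, h1⟩ = Complex.I • p.2}

/-- for a symmetric pair `(A, B)` with associated operator `L(x,y) = (By, Ax)`,
the map `h ↦ (h, iB*h)` is a bijection from `N₋₁(A*B*)` onto the deficiency space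
`N₋ᵢ(L*)`, and `h ↦ (h, -iB*h)` is a bijection from `N₋₁(A*B*)` onto `N₊ᵢ(L*)`.
In particular `L` has equal deficiency indices. -/
theorem stmt15 (A : H₁ →ₗ.[ℂ] H₂) (B : H₂ →ₗ.[ℂ] H₁)
    (hA : Dense (A.domain : Set H₁)) (hB : Dense (B.domain : Set H₂))
    (hAB : ∀ (φ : A.domain) (ψ : B.domain),
      (inner ℂ (A φ) ((ψ : H₂)) : ℂ) = (inner ℂ ((φ : H₁)) (B ψ) : ℂ)) :
    ∃ g g' : H₁ → H₁ × H₂,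
      Set.BijOn g (NnegOne A B) (NdefNeg A B) ∧
      (∀ u (h1 : u ∈ B.adjoint.domain), u ∈ NnegOne A B →
        g u = (u, Complex.I • B.adjoint ⟨u, h1⟩)) ∧
      Set.BijOn g' (NnegOne A B) (NdefPos A B) ∧
      (∀ u (h1 : u ∈ B.adjoint.domain), u ∈ NnegOne A B →
        g' u = (u, -(Complex.I • B.adjoint ⟨u, h1⟩))) := by
  classical
  refine ⟨fun u => if h : u ∈ B.adjoint.domain then (u, Complex.I • B.adjoint ⟨u, h⟩) else 0,
    fun u => if h : u ∈ B.adjoint.domain then (u, -(Complex.I • B.adjoint ⟨u, h⟩)) else 0,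
    ⟨?_, ?_, ?_⟩, ?_, ⟨?_, ?_, ?_⟩, ?_⟩
  · -- MapsTo g
    rintro u ⟨h1, h2, h3⟩
    simp only [dif_pos h1]
    refine ⟨h1, Submodule.smul_mem _ _ h2, ?_, ?_⟩
    · have : (⟨Complex.I • B.adjoint ⟨u, h1⟩, Submodule.smul_mem _ _ h2⟩ : A.adjoint.domain)
        = Complex.I • (⟨B.adjoint ⟨u, h1⟩, h2⟩ : A.adjoint.domain) := rfl
      rw [this, A.adjoint.map_smul, h3, smul_neg]
    · simp [smul_smul, Complex.I_mul_I]
  · -- InjOn g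
    rintro u ⟨h1, -, -⟩ u' ⟨h1', -, -⟩ heq
    simp only [dif_pos h1, dif_pos h1'] at heq
    exact congrArg Prod.fst heq
  · -- SurjOn g
    rintro ⟨u, v⟩ ⟨h1, h2, hA', hB'⟩
    have hm : B.adjoint ⟨u, h1⟩ ∈ A.adjoint.domain := by
      rw [hB']; exact neg_mem (Submodule.smul_mem _ _ h2)
    refine ⟨u, ⟨h1, hm, ?_⟩, ?_⟩
    · have : (⟨B.adjoint ⟨u, h1⟩, hm⟩ : A.adjoint.domain)
        = -(Complex.I • (⟨v, h2⟩ : A.adjoint.domain)) := Subtype.ext hB'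
      rw [this, A.adjoint.map_neg, A.adjoint.map_smul, hA']
      simp [smul_smul, Complex.I_mul_I]
    · simp only [dif_pos h1, hB']
      simp [smul_smul, Complex.I_mul_I]
  · -- formula for g
    intro u h1 _
    simp only [dif_pos h1]
  · -- MapsTo g'
    rintro u ⟨h1, h2, h3⟩
    simp only [dif_pos h1]
    refine ⟨h1, neg_mem (Submodule.smul_mem _ _ h2), ?_, ?_⟩
    · have : (⟨-(Complex.I • B.adjoint ⟨u, h1⟩), neg_mem (Submodule.smul_mem _ _ h2)⟩ :
          A.adjoint.domain)
        = -(Complex.I • (⟨B.adjoint ⟨u, h1⟩, h2⟩ : A.adjoint.domain)) := rfl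
      rw [this, A.adjoint.map_neg, A.adjoint.map_smul, h3]
      simp
    · simp [smul_smul, Complex.I_mul_I]
  · -- InjOn g'
    rintro u ⟨h1, -, -⟩ u' ⟨h1', -, -⟩ heq
    simp only [dif_pos h1, dif_pos h1'] at heq
    exact congrArg Prod.fst heq
  · -- SurjOn g'
    rintro ⟨u, v⟩ ⟨h1, h2, hA', hB'⟩
    have hm : B.adjoint ⟨u, h1⟩ ∈ A.adjoint.domain := by
      rw [hB']; exact Submodule.smul_mem _ _ h2
    refine ⟨u, ⟨h1, hm, ?_⟩, ?_⟩
    · have : (⟨B.adjoint ⟨u, h1⟩, hm⟩ : A.adjoint.domain)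
        = Complex.I • (⟨v, h2⟩ : A.adjoint.domain) := Subtype.ext hB'
      rw [this, A.adjoint.map_smul, hA']
      simp [smul_smul, Complex.I_mul_I]
    · simp only [dif_pos h1, hB']
      simp [smul_smul, Complex.I_mul_I]
  · -- formula for g'
    intro u h1 _
    simp only [dif_pos h1]

end SymPair
end

section
/- Let (A, B) be a symmetric pair and L the associated symmetric operator on H₁ ⊕ H₂. Then L is essentially selfadjoint if and only if {h₁ ∈ dom(A*B*) : A*B*h₁ = -h₁} = {0}, if and only if {h₂ ∈ dom(B*A*) : B*A*h₂ = -h₂} = {0}. -/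
section SymPair

variable {H₁ H₂ : Type*}
  [NormedAddCommGroup H₁] [InnerProductSpace ℂ H₁] [CompleteSpace H₁]
  [NormedAddCommGroup H₂] [InnerProductSpace ℂ H₂] [CompleteSpace H₂]

/-- `{h ∈ dom(B*A*) : B*A*h = -h}` (a subset of `H₂`). -/
noncomputable def NnegOne' (A : H₁ →ₗ.[ℂ] H₂) (B : H₂ →ₗ.[ℂ] H₁) : Set H₂ :=
  {h | ∃ (h1 : h ∈ A.adjoint.domain) (h2 : A.adjoint ⟨h, h1⟩ ∈ B.adjoint.domain),
    B.adjoint ⟨A.adjoint ⟨h, h1⟩, h2⟩ = -h}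

section Helpers

variable {E F : Type*} [AddCommGroup E] [Module ℂ E] [AddCommGroup F] [Module ℂ F]

lemma pmap_congr (f : E →ₗ.[ℂ] F) {x y : E} (h : x = y)
    (hx : x ∈ f.domain) (hy : y ∈ f.domain) : f ⟨x, hx⟩ = f ⟨y, hy⟩ := by
  cases h; rfl

lemma pmap_zero (f : E →ₗ.[ℂ] F) : f ⟨0, f.domain.zero_mem⟩ = 0 := f.map_zero

lemma pmap_smul (f : E →ₗ.[ℂ] F) (c : ℂ) {x : E} (hx : x ∈ f.domain) :
    f ⟨c • x, f.domain.smul_mem c hx⟩ = c • f ⟨x, hx⟩ := f.map_smul c ⟨x, hx⟩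

lemma pmap_neg (f : E →ₗ.[ℂ] F) {x : E} (hx : x ∈ f.domain) :
    f ⟨-x, f.domain.neg_mem hx⟩ = - f ⟨x, hx⟩ := f.map_neg ⟨x, hx⟩

end Helpers

lemma zero_mem_NnegOne (A : H₁ →ₗ.[ℂ] H₂) (B : H₂ →ₗ.[ℂ] H₁) :
    (0 : H₁) ∈ NnegOne A B := by
  have hB0 : B.adjoint ⟨0, B.adjoint.domain.zero_mem⟩ = 0 := pmap_zero _
  refine ⟨B.adjoint.domain.zero_mem, by rw [hB0]; exact A.adjoint.domain.zero_mem, ?_⟩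
  rw [pmap_congr A.adjoint hB0 _ A.adjoint.domain.zero_mem, pmap_zero, neg_zero]

lemma zero_mem_NnegOne' (A : H₁ →ₗ.[ℂ] H₂) (B : H₂ →ₗ.[ℂ] H₁) :
    (0 : H₂) ∈ NnegOne' A B := by
  have hA0 : A.adjoint ⟨0, A.adjoint.domain.zero_mem⟩ = 0 := pmap_zero _
  refine ⟨A.adjoint.domain.zero_mem, by rw [hA0]; exact B.adjoint.domain.zero_mem, ?_⟩
  rw [pmap_congr B.adjoint hA0 _ B.adjoint.domain.zero_mem, pmap_zero, neg_zero]

lemma zero_mem_NdefNeg (A : H₁ →ₗ.[ℂ] H₂) (B : H₂ →ₗ.[ℂ] H₁) :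
    (0 : H₁ × H₂) ∈ NdefNeg A B := by
  refine ⟨B.adjoint.domain.zero_mem, A.adjoint.domain.zero_mem, ?_, ?_⟩ <;>
    · simp only [Prod.fst_zero, Prod.snd_zero]; rw [pmap_zero]; simp

lemma zero_mem_NdefPos (A : H₁ →ₗ.[ℂ] H₂) (B : H₂ →ₗ.[ℂ] H₁) :
    (0 : H₁ × H₂) ∈ NdefPos A B := by
  refine ⟨B.adjoint.domain.zero_mem, A.adjoint.domain.zero_mem, ?_, ?_⟩ <;>
    · simp only [Prod.fst_zero, Prod.snd_zero]; rw [pmap_zero]; simp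

/-- From an element of `NdefNeg`, the first component lies in `NnegOne`. -/
lemma NdefNeg_fst_mem (A : H₁ →ₗ.[ℂ] H₂) (B : H₂ →ₗ.[ℂ] H₁) {u : H₁} {v : H₂}
    (h : (u, v) ∈ NdefNeg A B) : u ∈ NnegOne A B := by
  obtain ⟨h1, h2, hAe, hBe⟩ := h
  have hmem : B.adjoint ⟨u, h1⟩ ∈ A.adjoint.domain := by
    rw [hBe]; exact A.adjoint.domain.neg_mem (A.adjoint.domain.smul_mem _ h2)
  refine ⟨h1, hmem, ?_⟩
  rw [pmap_congr A.adjoint hBe hmem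
      (A.adjoint.domain.neg_mem (A.adjoint.domain.smul_mem _ h2)),
    pmap_neg _ (A.adjoint.domain.smul_mem _ h2), pmap_smul _ _ h2, hAe, smul_neg, smul_smul, Complex.I_mul_I, neg_neg,
    neg_one_smul]

/-- From an element of `NdefPos`, the first component lies in `NnegOne`. -/
lemma NdefPos_fst_mem (A : H₁ →ₗ.[ℂ] H₂) (B : H₂ →ₗ.[ℂ] H₁) {u : H₁} {v : H₂}
    (h : (u, v) ∈ NdefPos A B) : u ∈ NnegOne A B := by
  obtain ⟨h1, h2, hAe, hBe⟩ := h
  have hmem : B.adjoint ⟨u, h1⟩ ∈ A.adjoint.domain := by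
    rw [hBe]; exact A.adjoint.domain.smul_mem _ h2
  refine ⟨h1, hmem, ?_⟩
  rw [pmap_congr A.adjoint hBe hmem (A.adjoint.domain.smul_mem _ h2),
    pmap_smul _ _ h2, hAe, smul_smul, Complex.I_mul_I, neg_one_smul]

/-- From an element of `NdefNeg`, the second component lies in `NnegOne'`. -/
lemma NdefNeg_snd_mem (A : H₁ →ₗ.[ℂ] H₂) (B : H₂ →ₗ.[ℂ] H₁) {u : H₁} {v : H₂}
    (h : (u, v) ∈ NdefNeg A B) : v ∈ NnegOne' A B := by
  obtain ⟨h1, h2, hAe, hBe⟩ := h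
  have hmem : A.adjoint ⟨v, h2⟩ ∈ B.adjoint.domain := by
    rw [hAe]; exact B.adjoint.domain.neg_mem (B.adjoint.domain.smul_mem _ h1)
  refine ⟨h2, hmem, ?_⟩
  rw [pmap_congr B.adjoint hAe hmem
      (B.adjoint.domain.neg_mem (B.adjoint.domain.smul_mem _ h1)),
    pmap_neg _ (B.adjoint.domain.smul_mem _ h1), pmap_smul _ _ h1, hBe, smul_neg, smul_smul, Complex.I_mul_I, neg_neg,
    neg_one_smul]

/-- From an element of `NdefPos`, the second component lies in `NnegOne'`. -/
lemma NdefPos_snd_mem (A : H₁ →ₗ.[ℂ] H₂) (B : H₂ →ₗ.[ℂ] H₁) {u : H₁} {v : H₂}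
    (h : (u, v) ∈ NdefPos A B) : v ∈ NnegOne' A B := by
  obtain ⟨h1, h2, hAe, hBe⟩ := h
  have hmem : A.adjoint ⟨v, h2⟩ ∈ B.adjoint.domain := by
    rw [hAe]; exact B.adjoint.domain.smul_mem _ h1
  refine ⟨h2, hmem, ?_⟩
  rw [pmap_congr B.adjoint hAe hmem (B.adjoint.domain.smul_mem _ h1),
    pmap_smul _ _ h1, hBe, smul_smul, Complex.I_mul_I, neg_one_smul]

/-- From `u ∈ NnegOne`, `(u, I • B*u) ∈ NdefNeg`. -/
lemma NnegOne_to_NdefNeg (A : H₁ →ₗ.[ℂ] H₂) (B : H₂ →ₗ.[ℂ] H₁) {u : H₁}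
    (h : u ∈ NnegOne A B) :
    ∃ v : H₂, (u, v) ∈ NdefNeg A B := by
  obtain ⟨h1, h2, h3⟩ := h
  refine ⟨Complex.I • B.adjoint ⟨u, h1⟩, h1, A.adjoint.domain.smul_mem _ h2, ?_, ?_⟩
  · rw [pmap_smul _ _ h2, h3, smul_neg]
  · rw [smul_smul, Complex.I_mul_I, neg_one_smul, neg_neg]

/-- From `u ∈ NnegOne`, `(u, -(I • B*u)) ∈ NdefPos`. -/
lemma NnegOne_to_NdefPos (A : H₁ →ₗ.[ℂ] H₂) (B : H₂ →ₗ.[ℂ] H₁) {u : H₁}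
    (h : u ∈ NnegOne A B) :
    ∃ v : H₂, (u, v) ∈ NdefPos A B := by
  obtain ⟨h1, h2, h3⟩ := h
  refine ⟨-(Complex.I • B.adjoint ⟨u, h1⟩), h1,
    A.adjoint.domain.neg_mem (A.adjoint.domain.smul_mem _ h2), ?_, ?_⟩
  · rw [pmap_neg _ (A.adjoint.domain.smul_mem _ h2), pmap_smul _ _ h2, h3, smul_neg, neg_neg]
  · rw [smul_neg, smul_smul, Complex.I_mul_I, neg_one_smul, neg_neg]

/-- From `v ∈ NnegOne'`, `(I • A*v, v) ∈ NdefNeg`. -/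
lemma NnegOne'_to_NdefNeg (A : H₁ →ₗ.[ℂ] H₂) (B : H₂ →ₗ.[ℂ] H₁) {v : H₂}
    (h : v ∈ NnegOne' A B) :
    ∃ u : H₁, (u, v) ∈ NdefNeg A B := by
  obtain ⟨h1, h2, h3⟩ := h
  refine ⟨Complex.I • A.adjoint ⟨v, h1⟩, B.adjoint.domain.smul_mem _ h2, h1, ?_, ?_⟩
  · rw [smul_smul, Complex.I_mul_I, neg_one_smul, neg_neg]
  · rw [pmap_smul _ _ h2, h3, smul_neg]

/-- From `v ∈ NnegOne'`, `(-(I • A*v), v) ∈ NdefPos`. -/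
lemma NnegOne'_to_NdefPos (A : H₁ →ₗ.[ℂ] H₂) (B : H₂ →ₗ.[ℂ] H₁) {v : H₂}
    (h : v ∈ NnegOne' A B) :
    ∃ u : H₁, (u, v) ∈ NdefPos A B := by
  obtain ⟨h1, h2, h3⟩ := h
  refine ⟨-(Complex.I • A.adjoint ⟨v, h1⟩),
    B.adjoint.domain.neg_mem (B.adjoint.domain.smul_mem _ h2), h1, ?_, ?_⟩
  · rw [smul_neg, smul_smul, Complex.I_mul_I, neg_one_smul, neg_neg]
  · rw [pmap_neg _ (B.adjoint.domain.smul_mem _ h2), pmap_smul _ _ h2, h3, smul_neg, neg_neg]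

/-- In an element of `NdefNeg`, if one component vanishes, so does the other. -/
lemma NdefNeg_fst_zero (A : H₁ →ₗ.[ℂ] H₂) (B : H₂ →ₗ.[ℂ] H₁) {u : H₁} {v : H₂}
    (h : (u, v) ∈ NdefNeg A B) (hu : u = 0) : v = 0 := by
  obtain ⟨h1, h2, hAe, hBe⟩ := h
  subst hu
  rw [pmap_zero] at hBe
  have : Complex.I • v = 0 := neg_eq_zero.mp hBe.symm
  exact (smul_eq_zero.mp this).resolve_left Complex.I_ne_zero

lemma NdefNeg_snd_zero (A : H₁ →ₗ.[ℂ] H₂) (B : H₂ →ₗ.[ℂ] H₁) {u : H₁} {v : H₂}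
    (h : (u, v) ∈ NdefNeg A B) (hv : v = 0) : u = 0 := by
  obtain ⟨h1, h2, hAe, hBe⟩ := h
  subst hv
  rw [pmap_zero] at hAe
  have : Complex.I • u = 0 := neg_eq_zero.mp hAe.symm
  exact (smul_eq_zero.mp this).resolve_left Complex.I_ne_zero

lemma NdefPos_fst_zero (A : H₁ →ₗ.[ℂ] H₂) (B : H₂ →ₗ.[ℂ] H₁) {u : H₁} {v : H₂}
    (h : (u, v) ∈ NdefPos A B) (hu : u = 0) : v = 0 := by
  obtain ⟨h1, h2, hAe, hBe⟩ := h
  subst hu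
  rw [pmap_zero] at hBe
  exact (smul_eq_zero.mp hBe.symm).resolve_left Complex.I_ne_zero

/-- for a symmetric pair `(A, B)` with associated symmetric operator
`L(x,y) = (By, Ax)`, `L` is essentially selfadjoint (i.e. both deficiency spaces
`N±ᵢ(L*)` vanish) iff `{h₁ ∈ dom(A*B*) : A*B*h₁ = -h₁} = {0}` iff
`{h₂ ∈ dom(B*A*) : B*A*h₂ = -h₂} = {0}`. -/
theorem stmt16 (A : H₁ →ₗ.[ℂ] H₂) (B : H₂ →ₗ.[ℂ] H₁)
    (hA : Dense (A.domain : Set H₁)) (hB : Dense (B.domain : Set H₂))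
    (hAB : ∀ (φ : A.domain) (ψ : B.domain),
      (inner ℂ (A φ) ((ψ : H₂)) : ℂ) = (inner ℂ ((φ : H₁)) (B ψ) : ℂ)) :
    ((NdefNeg A B = {0} ∧ NdefPos A B = {0}) ↔ NnegOne A B = {0}) ∧
    ((NdefNeg A B = {0} ∧ NdefPos A B = {0}) ↔ NnegOne' A B = {0}) := by
  have key1 : NdefNeg A B = {0} → NnegOne A B = {0} := by
    intro h
    refine Set.eq_singleton_iff_unique_mem.mpr ⟨zero_mem_NnegOne A B, ?_⟩
    intro u hu
    obtain ⟨v, hv⟩ := NnegOne_to_NdefNeg A B hu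
    rw [h] at hv
    exact congrArg Prod.fst hv
  have key2 : NdefNeg A B = {0} → NnegOne' A B = {0} := by
    intro h
    refine Set.eq_singleton_iff_unique_mem.mpr ⟨zero_mem_NnegOne' A B, ?_⟩
    intro v hv
    obtain ⟨u, hu⟩ := NnegOne'_to_NdefNeg A B hv
    rw [h] at hu
    exact congrArg Prod.snd hu
  have key3 : NnegOne A B = {0} → NdefNeg A B = {0} := by
    intro h
    refine Set.eq_singleton_iff_unique_mem.mpr ⟨zero_mem_NdefNeg A B, ?_⟩
    rintro ⟨u, v⟩ hp
    have hu : u = 0 := by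
      have := NdefNeg_fst_mem A B hp; rw [h] at this; exact this
    exact Prod.ext hu (NdefNeg_fst_zero A B hp hu)
  have key4 : NnegOne A B = {0} → NdefPos A B = {0} := by
    intro h
    refine Set.eq_singleton_iff_unique_mem.mpr ⟨zero_mem_NdefPos A B, ?_⟩
    rintro ⟨u, v⟩ hp
    have hu : u = 0 := by
      have := NdefPos_fst_mem A B hp; rw [h] at this; exact this
    exact Prod.ext hu (NdefPos_fst_zero A B hp hu)
  have key5 : NnegOne' A B = {0} → NdefNeg A B = {0} := by
    intro h
    refine Set.eq_singleton_iff_unique_mem.mpr ⟨zero_mem_NdefNeg A B, ?_⟩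
    rintro ⟨u, v⟩ hp
    have hv : v = 0 := by
      have := NdefNeg_snd_mem A B hp; rw [h] at this; exact this
    exact Prod.ext (NdefNeg_snd_zero A B hp hv) hv
  have key6 : NnegOne' A B = {0} → NdefPos A B = {0} := by
    intro h
    have hv' : NnegOne A B = {0} := key1 (key5 h)
    exact key4 hv'
  exact ⟨⟨fun h => key1 h.1, fun h => ⟨key3 h, key4 h⟩⟩,
    ⟨fun h => key2 h.1, fun h => ⟨key5 h, key6 h⟩⟩⟩

end SymPair
end

section
/- Let A be a densely defined operator in a Hilbert space H with domain D such that ⟨φ, Aφ⟩ ≥ ‖φ‖² for all φ ∈ D. Let H_A be the completion of D under the norm ‖φ‖_A² = ⟨φ, Aφ⟩, and J : H_A → H the contractive inclusion. Then (JJ*)⁻¹ is a selfadjoint operator in H extending A, i.e., (JJ*)⁻¹φ = Aφ for all φ ∈ D. (This is the Friedrichs extension.) -/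
open scoped ComplexConjugate

/-- Friedrichs extension: Let `A` be densely defined in `H` with domain `D`
and `⟨φ, Aφ⟩ ≥ ‖φ‖²` on `D`. Let `H_A` be the completion of `D` under
`⟨f, g⟩_A = ⟨f, Ag⟩` (abstractly: a Hilbert space `HA` with a linear map `e : D → HA` having
dense range and `⟨e φ, e ψ⟩_A = ⟨φ, Aψ⟩`), and let `J : H_A → H` be the contractive
inclusion (`J(e φ) = φ`, `‖Jv‖ ≤ ‖v‖`). Then `(JJ*)⁻¹` is a selfadjoint operator in `H`
extending `A`: there is a selfadjoint `S` with `dense domain`, `S = (JJ*)⁻¹` (i.e.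
`JJ* ∘ S = id` on `dom S` and `S ∘ JJ* = id` with `ran(JJ*) = dom S`), and `Sφ = Aφ` on `D`. -/
theorem stmt17 {H HA : Type*}
    [NormedAddCommGroup H] [InnerProductSpace ℂ H] [CompleteSpace H]
    [NormedAddCommGroup HA] [InnerProductSpace ℂ HA] [CompleteSpace HA]
    (A : H →ₗ.[ℂ] H) (hA : Dense (A.domain : Set H))
    (hpos : ∀ φ : A.domain, (‖(φ : H)‖ : ℝ) ^ 2 ≤ ((inner ℂ ((φ : H)) (A φ) : ℂ)).re)
    (e : A.domain →ₗ[ℂ] HA) (he : Dense (Set.range e))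
    (hinner : ∀ φ ψ : A.domain,
      (inner ℂ (e φ) (e ψ) : ℂ) = (inner ℂ ((φ : H)) (A ψ) : ℂ))
    (J : HA →L[ℂ] H) (hJ : ∀ φ : A.domain, J (e φ) = (φ : H))
    (hJcontr : ∀ v : HA, ‖J v‖ ≤ ‖v‖) :
    ∃ S : H →ₗ.[ℂ] H, Dense (S.domain : Set H) ∧ S.adjoint = S ∧
      (∀ y : H, ∃ hy : J (ContinuousLinearMap.adjoint J y) ∈ S.domain,
        S ⟨J (ContinuousLinearMap.adjoint J y), hy⟩ = y) ∧
      (∀ x : S.domain, J (ContinuousLinearMap.adjoint J (S x)) = (x : H)) ∧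
      (∀ φ : A.domain, ∃ h : (φ : H) ∈ S.domain, S ⟨(φ : H), h⟩ = A φ) := by
  classical
  set T : H →L[ℂ] H := J ∘L ContinuousLinearMap.adjoint J with hT
  -- T is selfadjoint
  have hTsa : ∀ x y : H, (inner ℂ (T x) y : ℂ) = inner ℂ x (T y) := by
    intro x y
    simp only [hT, ContinuousLinearMap.comp_apply]
    rw [← ContinuousLinearMap.adjoint_inner_left J,
      ContinuousLinearMap.adjoint_inner_right J]
  -- J* is injective since range J ⊇ A.domain is dense
  have hJadj_inj : ∀ y : H, ContinuousLinearMap.adjoint J y = 0 → y = 0 := by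
    intro y hy
    refine hA.eq_zero_of_inner_right ℂ ?_
    intro φ' hφ'
    let φ : A.domain := ⟨φ', hφ'⟩
    have : (inner ℂ (J (e φ)) y : ℂ) = inner ℂ (e φ) (ContinuousLinearMap.adjoint J y) :=
      (ContinuousLinearMap.adjoint_inner_right J _ _).symm
    rw [hy, inner_zero_right, hJ] at this
    exact this
  -- T is injective
  have hTinj : Function.Injective T := by
    rw [injective_iff_map_eq_zero]
    intro y hy
    have h1 : (inner ℂ y (T y) : ℂ) = 0 := by rw [hy, inner_zero_right]
    have h2 : (inner ℂ y (T y) : ℂ) =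
        inner ℂ (ContinuousLinearMap.adjoint J y) (ContinuousLinearMap.adjoint J y) := by
      simp only [hT, ContinuousLinearMap.comp_apply]
      rw [← ContinuousLinearMap.adjoint_inner_left J]
    rw [h2] at h1
    exact hJadj_inj y (inner_self_eq_zero.mp h1)
  have hTinj' : Function.Injective (T : H →ₗ[ℂ] H) := hTinj
  -- the inverse as a linear equiv
  set E := LinearEquiv.ofInjective (T : H →ₗ[ℂ] H) hTinj' with hE
  set S : H →ₗ.[ℂ] H :=
    ⟨LinearMap.range (T : H →ₗ[ℂ] H), E.symm.toLinearMap⟩ with hS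
  have hmem : ∀ y : H, T y ∈ S.domain := fun y => LinearMap.mem_range_self _ y
  have hSapp : ∀ (y : H) (h : T y ∈ S.domain), S ⟨T y, h⟩ = y := by
    intro y h
    have : (⟨T y, h⟩ : S.domain) = E y := rfl
    show E.symm (⟨T y, h⟩ : S.domain) = y
    rw [this, LinearEquiv.symm_apply_apply]
  have hmemiff : ∀ x : H, x ∈ S.domain ↔ ∃ y : H, T y = x := by
    intro x
    constructor
    · rintro ⟨y, rfl⟩; exact ⟨y, rfl⟩
    · rintro ⟨y, rfl⟩; exact hmem y
  have hTS : ∀ x : S.domain, T (S x) = (x : H) := by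
    rintro ⟨x, hx⟩
    obtain ⟨y, rfl⟩ := (hmemiff x).mp hx
    rw [hSapp y]
  -- domain of S is dense
  have hdense : Dense (S.domain : Set H) := by
    rw [Submodule.dense_iff_topologicalClosure_eq_top,
      Submodule.topologicalClosure_eq_top_iff, Submodule.eq_bot_iff]
    intro v hv
    have h0 : (inner ℂ (T v) (T v) : ℂ) = 0 := by
      rw [← hTsa (T v) v]
      exact (Submodule.mem_orthogonal _ v).mp hv _ (hmem (T v))
    have : T v = 0 := inner_self_eq_zero.mp h0
    exact hTinj (by rw [this, map_zero])
  -- S is symmetric: formal adjoint of itself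
  have hsymm : S.IsFormalAdjoint S := by
    rintro ⟨x, hx⟩ ⟨y, hy⟩
    obtain ⟨u, rfl⟩ := (hmemiff x).mp hx
    obtain ⟨v, rfl⟩ := (hmemiff y).mp hy
    show (inner ℂ (S ⟨T u, hx⟩) ((⟨T v, hy⟩ : S.domain) : H) : ℂ)
      = inner ℂ ((⟨T u, hx⟩ : S.domain) : H) (S ⟨T v, hy⟩)
    rw [hSapp u, hSapp v]
    show (inner ℂ u (T v) : ℂ) = inner ℂ (T u) v
    rw [hTsa]
  -- now S.adjoint = S
  have key : ∀ (y : H) (hy : y ∈ S.adjoint.domain),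
      y = T (S.adjoint ⟨y, hy⟩) := by
    intro y hy
    have hform := LinearPMap.adjoint_isFormalAdjoint (hT := hdense)
      (⟨y, hy⟩ : S.adjoint.domain)
    set z := S.adjoint ⟨y, hy⟩ with hz
    refine ext_inner_right ℂ ?_
    intro u
    have h1 := hform ⟨T u, hmem u⟩
    rw [hSapp u] at h1
    calc (inner ℂ y u : ℂ) = inner ℂ z ((⟨T u, hmem u⟩ : S.domain) : H) := h1.symm
      _ = inner ℂ (T z) u := (hTsa z u).symm
  have hadj : S.adjoint = S := by
    have hle : S ≤ S.adjoint := LinearPMap.IsFormalAdjoint.le_adjoint hdense hsymm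
    have hge : S.adjoint ≤ S := by
      constructor
      case left =>
        intro y hy
        rw [key y hy]
        exact hmem _
      case right =>
        rintro ⟨y, hy⟩ ⟨y', hy'⟩ hyy
        simp only at hyy
        set z := S.adjoint ⟨y, hy⟩ with hz
        have hyz : y = T z := key y hy
        have heq : (⟨y', hy'⟩ : S.domain) = ⟨T z, hmem z⟩ := by
          apply Subtype.ext
          simp only [← hyy, hyz]
        rw [heq, hSapp z]
    exact le_antisymm hge hle
  -- extension of A: J* (A φ) = e φ, hence T (A φ) = φ
  have hJadjA : ∀ φ : A.domain, ContinuousLinearMap.adjoint J (A φ) = e φ := by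
    intro φ
    have hrange : Dense ((LinearMap.range e : Submodule ℂ HA) : Set HA) := by
      simpa [LinearMap.coe_range] using he
    refine hrange.eq_of_inner_right ℂ ?_
    rintro _ ⟨ψ, rfl⟩
    show (inner ℂ (e ψ) (ContinuousLinearMap.adjoint J (A φ)) : ℂ) = inner ℂ (e ψ) (e φ)
    rw [ContinuousLinearMap.adjoint_inner_right J, hJ ψ, ← hinner ψ φ]
  have hTA : ∀ φ : A.domain, T ((A φ : H)) = (φ : H) := by
    intro φ
    show J (ContinuousLinearMap.adjoint J (A φ)) = (φ : H)
    rw [hJadjA φ, hJ φ]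
  refine ⟨S, hdense, hadj, ?_, ?_, ?_⟩
  · intro y
    exact ⟨hmem y, hSapp y _⟩
  · intro x
    exact hTS x
  · intro φ
    have h : (φ : H) ∈ S.domain := hTA φ ▸ hmem (A φ)
    refine ⟨h, ?_⟩
    have heq : (⟨(φ : H), h⟩ : S.domain) = ⟨T (A φ), hmem (A φ)⟩ := by
      apply Subtype.ext
      simp [hTA φ]
    rw [heq, hSapp]
end
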